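/- Let γ > 0, 0 < α < 1, and let l ≥ 0 be an integer. For all j ≥ 1, |F_{j+l}/F_j − 1| ≤ αγ²l / ([1+(j+l)γ]·[1−α(1+γ)+jγ(1−α)]) whenever the second bracket is positive; in particular |F_{j+l}/F_j − 1| = O(j^(−2)) as j → ∞, and the infinite product ∏_{j≥1} F_{j+l}/F_j converges. -/

import Mathlib

open MeasureTheory Real Filter

lemma intIoo_rpow (c : ℝ) (hc : 0 < c) :
    ∫ u in Set.Ioo (0:ℝ) 1, u ^ c = 1 / (c + 1) := by
  rw [← integral_Ioc_eq_integral_Ioo, ← intervalIntegral.integral_of_le (by norm_num : (0:ℝ) ≤ 1)]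
  rw [integral_rpow (Or.inl (by linarith))]
  rw [Real.one_rpow, Real.zero_rpow (by linarith)]
  ring

lemma intIoo_rpow_A (c : ℝ) (hc : 0 < c) (A : ℝ) :
    ∫ u in Set.Ioo (0:ℝ) 1, u ^ c * A = A / (c + 1) := by
  rw [integral_mul_const, intIoo_rpow c hc]
  ring

lemma contOn_base (γ α : ℝ) (hα : 0 < α) (hα1 : α < 1) :
    ContinuousOn (fun u : ℝ => (1 - α * u) ^ (-γ - 1)) (Set.Icc 0 1) := by
  apply ContinuousOn.rpow_const
  · fun_prop
  · intro x hx
    left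
    simp only [Set.mem_Icc] at hx
    nlinarith [hx.1, hx.2]

lemma intg_g (γ α : ℝ) (hα : 0 < α) (hα1 : α < 1) (c : ℝ) (hc : 0 ≤ c) :
    IntegrableOn (fun u : ℝ => u ^ c * (1 - α * u) ^ (-γ - 1)) (Set.Ioo 0 1) := by
  apply IntegrableOn.mono_set _ Set.Ioo_subset_Icc_self
  apply ContinuousOn.integrableOn_Icc
  exact ((Real.continuous_rpow_const hc).continuousOn).mul (contOn_base γ α hα hα1)

lemma intg_gA (c : ℝ) (hc : 0 ≤ c) (A : ℝ) :
    IntegrableOn (fun u : ℝ => u ^ c * A) (Set.Ioo (0:ℝ) 1) := by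
  apply IntegrableOn.mono_set _ Set.Ioo_subset_Icc_self
  apply ContinuousOn.integrableOn_Icc
  exact ((Real.continuous_rpow_const hc).continuousOn).mul continuousOn_const

lemma intg_base (γ α : ℝ) (hα : 0 < α) (hα1 : α < 1) :
    IntegrableOn (fun u : ℝ => (1 - α * u) ^ (-γ - 1)) (Set.Ioo 0 1) :=
  IntegrableOn.mono_set ((contOn_base γ α hα hα1).integrableOn_Icc) Set.Ioo_subset_Icc_self

lemma base_le (γ α : ℝ) (hγ : 0 < γ) (hα : 0 < α) (hα1 : α < 1)
    (u : ℝ) (hu : u ∈ Set.Ioo (0:ℝ) 1) :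
    (1 - α * u) ^ (-γ - 1) ≤ (1 - α) ^ (-γ - 1) := by
  obtain ⟨h0, h1⟩ := hu
  exact Real.rpow_le_rpow_of_nonpos (by linarith) (by nlinarith) (by linarith)

lemma base_nonneg (γ α : ℝ) (hα : 0 < α) (hα1 : α < 1)
    (u : ℝ) (hu : u ∈ Set.Ioo (0:ℝ) 1) :
    0 ≤ (1 - α * u) ^ (-γ - 1) := by
  obtain ⟨h0, h1⟩ := hu
  exact Real.rpow_nonneg (by nlinarith) _

lemma I_nonneg (γ α : ℝ) (hα : 0 < α) (hα1 : α < 1) (c : ℝ) :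
    0 ≤ ∫ u in Set.Ioo (0:ℝ) 1, u ^ c * (1 - α * u) ^ (-γ - 1) := by
  apply setIntegral_nonneg measurableSet_Ioo
  intro u hu
  exact mul_nonneg (Real.rpow_nonneg hu.1.le _) (base_nonneg γ α hα hα1 u hu)

lemma I_le_div (γ α : ℝ) (hγ : 0 < γ) (hα : 0 < α) (hα1 : α < 1) (c : ℝ) (hc : 0 < c) :
    ∫ u in Set.Ioo (0:ℝ) 1, u ^ c * (1 - α * u) ^ (-γ - 1)
      ≤ (1 - α) ^ (-γ - 1) / (c + 1) := by
  rw [← intIoo_rpow_A c hc]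
  apply setIntegral_mono_on (intg_g γ α hα hα1 c hc.le) (intg_gA c hc.le _) measurableSet_Ioo
  intro u hu
  exact mul_le_mul_of_nonneg_left (base_le γ α hγ hα hα1 u hu) (Real.rpow_nonneg hu.1.le _)

lemma I_mono (γ α : ℝ) (hα : 0 < α) (hα1 : α < 1) (c d : ℝ) (hc : 0 < c) (hcd : c ≤ d) :
    ∫ u in Set.Ioo (0:ℝ) 1, u ^ d * (1 - α * u) ^ (-γ - 1)
      ≤ ∫ u in Set.Ioo (0:ℝ) 1, u ^ c * (1 - α * u) ^ (-γ - 1) := by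
  apply setIntegral_mono_on (intg_g γ α hα hα1 d (hc.le.trans hcd)) (intg_g γ α hα hα1 c hc.le)
    measurableSet_Ioo
  intro u hu
  exact mul_le_mul_of_nonneg_right
    (Real.rpow_le_rpow_of_exponent_ge hu.1 hu.2.le hcd) (base_nonneg γ α hα hα1 u hu)

lemma I_diff_le (γ α : ℝ) (hγ : 0 < γ) (hα : 0 < α) (hα1 : α < 1)
    (c d : ℝ) (hc : 0 < c) (hcd : c ≤ d) :
    (∫ u in Set.Ioo (0:ℝ) 1, u ^ c * (1 - α * u) ^ (-γ - 1))
      - (∫ u in Set.Ioo (0:ℝ) 1, u ^ d * (1 - α * u) ^ (-γ - 1))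
      ≤ (1 - α) ^ (-γ - 1) / (c + 1) - (1 - α) ^ (-γ - 1) / (d + 1) := by
  have hd : 0 < d := hc.trans_le hcd
  set A := (1 - α) ^ (-γ - 1) with hA
  have h1 : (∫ u in Set.Ioo (0:ℝ) 1, u ^ c * (1 - α * u) ^ (-γ - 1))
      - (∫ u in Set.Ioo (0:ℝ) 1, u ^ d * (1 - α * u) ^ (-γ - 1))
      = ∫ u in Set.Ioo (0:ℝ) 1,
          (u ^ c * (1 - α * u) ^ (-γ - 1) - u ^ d * (1 - α * u) ^ (-γ - 1)) :=
    (integral_sub (intg_g γ α hα hα1 c hc.le) (intg_g γ α hα hα1 d hd.le)).symm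
  have h3 : ∫ u in Set.Ioo (0:ℝ) 1, (u ^ c * A - u ^ d * A) = A / (c + 1) - A / (d + 1) := by
    rw [integral_sub (intg_gA c hc.le A) (intg_gA d hd.le A),
      intIoo_rpow_A c hc, intIoo_rpow_A d hd]
  rw [h1, ← h3]
  apply setIntegral_mono_on ((intg_g γ α hα hα1 c hc.le).sub (intg_g γ α hα hα1 d hd.le))
    ((intg_gA c hc.le A).sub (intg_gA d hd.le A)) measurableSet_Ioo
  intro u hu
  have h4 : u ^ d ≤ u ^ c := Real.rpow_le_rpow_of_exponent_ge hu.1 hu.2.le hcd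
  have h5 := base_le γ α hγ hα hα1 u hu
  have h6 := base_nonneg γ α hα hα1 u hu
  simp only [Pi.sub_apply]
  nlinarith [mul_le_mul_of_nonneg_left h5 (sub_nonneg.2 h4)]

lemma I_le_base (γ α : ℝ) (hγ : 0 < γ) (hα : 0 < α) (hα1 : α < 1) (c : ℝ) (hc : 0 ≤ c) :
    ∫ u in Set.Ioo (0:ℝ) 1, u ^ c * (1 - α * u) ^ (-γ - 1)
      ≤ ((1 - α) ^ (-γ) - 1) / (α * γ) := by
  have hasd : ∀ u ∈ Set.Icc (0:ℝ) 1, HasDerivAt (fun v : ℝ => (1 - α * v) ^ (-γ) / (α * γ))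
      ((1 - α * u) ^ (-γ - 1)) u := by
    intro u hu
    have hne : (1 - α * u) ≠ 0 := by
      simp only [Set.mem_Icc] at hu; nlinarith [hu.1, hu.2]
    have h1 : HasDerivAt (fun v : ℝ => 1 - α * v) (-α) u := by
      simpa using ((hasDerivAt_id u).const_mul α).const_sub 1
    have h2 := (Real.hasDerivAt_rpow_const (p := -γ) (Or.inl hne)).comp u h1
    have h3 := h2.div_const (α * γ)
    refine h3.congr_deriv ?_
    rw [div_eq_iff (by positivity)]
    ring
  have hbase : ∫ u in Set.Ioo (0:ℝ) 1, (1 - α * u) ^ (-γ - 1)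
      = ((1 - α) ^ (-γ) - 1) / (α * γ) := by
    rw [← integral_Ioc_eq_integral_Ioo,
      ← intervalIntegral.integral_of_le (by norm_num : (0:ℝ) ≤ 1)]
    have := intervalIntegral.integral_eq_sub_of_hasDerivAt
      (f := fun v : ℝ => (1 - α * v) ^ (-γ) / (α * γ))
      (f' := fun u : ℝ => (1 - α * u) ^ (-γ - 1)) (a := 0) (b := 1)
      (fun u hu => hasd u (by rwa [Set.uIcc_of_le (by norm_num : (0:ℝ) ≤ 1)] at hu))
      (by
        apply ((contOn_base γ α hα hα1).mono (by
          rw [Set.uIcc_of_le (by norm_num : (0:ℝ) ≤ 1)])).intervalIntegrable)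
    rw [this]
    norm_num
    field_simp
  rw [← hbase]
  apply setIntegral_mono_on (intg_g γ α hα hα1 c hc) (intg_base γ α hα hα1) measurableSet_Ioo
  intro u hu
  have := base_nonneg γ α hα hα1 u hu
  nlinarith [Real.rpow_le_one hu.1.le hu.2.le hc]
open MeasureTheory Real Filter

section
variable {γ α : ℝ} {F : ℕ → ℝ}

lemma F_ge_one (hγ : 0 < γ) (hα : 0 < α) (hα1 : α < 1)
    (hF : ∀ j : ℕ, F j =
      (1 - α) ^ (-γ) - α * γ * ∫ u in Set.Ioo (0 : ℝ) 1, u ^ (j * γ) * (1 - α * u) ^ (-γ - 1))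
    (j : ℕ) : 1 ≤ F j := by
  have h := I_le_base γ α hγ hα hα1 ((j:ℝ) * γ) (by positivity)
  have hag : 0 < α * γ := by positivity
  rw [hF j]
  have h2 := mul_le_mul_of_nonneg_left h hag.le
  rw [mul_div_cancel₀ _ hag.ne'] at h2
  linarith

lemma F_le_K (hγ : 0 < γ) (hα : 0 < α) (hα1 : α < 1)
    (hF : ∀ j : ℕ, F j =
      (1 - α) ^ (-γ) - α * γ * ∫ u in Set.Ioo (0 : ℝ) 1, u ^ (j * γ) * (1 - α * u) ^ (-γ - 1))
    (j : ℕ) : F j ≤ (1 - α) ^ (-γ) := by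
  have h := I_nonneg γ α hα hα1 ((j:ℝ) * γ)
  have hag2 : 0 < α * γ := by positivity
  rw [hF j]
  nlinarith [mul_nonneg (le_of_lt hag2) h]

lemma K_eq (hγ : 0 < γ) (hα : 0 < α) (hα1 : α < 1) :
    (1 - α) ^ (-γ) = (1 - α) ^ (-γ - 1) * (1 - α) := by
  have h : (0:ℝ) < 1 - α := by linarith
  have h2 : (1 - α) ^ (-γ - 1) * (1 - α) = (1 - α) ^ (-γ - 1) * (1 - α) ^ (1:ℝ) := by
    rw [Real.rpow_one]
  rw [h2, ← Real.rpow_add h]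
  norm_num

lemma F_lower (hγ : 0 < γ) (hα : 0 < α) (hα1 : α < 1)
    (hF : ∀ j : ℕ, F j =
      (1 - α) ^ (-γ) - α * γ * ∫ u in Set.Ioo (0 : ℝ) 1, u ^ (j * γ) * (1 - α * u) ^ (-γ - 1))
    (j : ℕ) (hj : 1 ≤ j) :
    (1 - α) ^ (-γ - 1) * (1 - α * (1 + γ) + (j:ℝ) * γ * (1 - α)) / (1 + (j:ℝ) * γ) ≤ F j := by
  have hjγ : 0 < (j:ℝ) * γ := by
    have : (1:ℝ) ≤ (j:ℝ) := by exact_mod_cast hj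
    nlinarith
  have h := I_le_div γ α hγ hα hα1 ((j:ℝ) * γ) hjγ
  have hag : 0 < α * γ := by positivity
  rw [hF j, K_eq hγ hα hα1]
  have h2 : α * γ * (∫ u in Set.Ioo (0 : ℝ) 1, u ^ ((j:ℝ) * γ) * (1 - α * u) ^ (-γ - 1))
      ≤ α * γ * ((1 - α) ^ (-γ - 1) / ((j:ℝ) * γ + 1)) := by
    exact mul_le_mul_of_nonneg_left h hag.le
  have heq : (1 - α) ^ (-γ - 1) * (1 - α) - α * γ * ((1 - α) ^ (-γ - 1) / ((j:ℝ) * γ + 1))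
      = (1 - α) ^ (-γ - 1) * (1 - α * (1 + γ) + (j:ℝ) * γ * (1 - α)) / (1 + (j:ℝ) * γ) := by
    field_simp
    ring
  linarith [heq ▸ sub_le_sub_left h2 ((1 - α) ^ (-γ - 1) * (1 - α))]

lemma F_diff_nonneg (hγ : 0 < γ) (hα : 0 < α) (hα1 : α < 1)
    (hF : ∀ j : ℕ, F j =
      (1 - α) ^ (-γ) - α * γ * ∫ u in Set.Ioo (0 : ℝ) 1, u ^ (j * γ) * (1 - α * u) ^ (-γ - 1))
    (l j : ℕ) (hj : 1 ≤ j) : 0 ≤ F (j + l) - F j := by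
  have hjγ : 0 < (j:ℝ) * γ := by
    have : (1:ℝ) ≤ (j:ℝ) := by exact_mod_cast hj
    nlinarith
  have hmono := I_mono γ α hα hα1 ((j:ℝ) * γ) (((j:ℝ) + (l:ℝ)) * γ) hjγ
    (by nlinarith [Nat.cast_nonneg (α := ℝ) l])
  have hag : 0 < α * γ := by positivity
  rw [hF (j+l), hF j]
  push_cast
  nlinarith

lemma F_diff_le (hγ : 0 < γ) (hα : 0 < α) (hα1 : α < 1)
    (hF : ∀ j : ℕ, F j =
      (1 - α) ^ (-γ) - α * γ * ∫ u in Set.Ioo (0 : ℝ) 1, u ^ (j * γ) * (1 - α * u) ^ (-γ - 1))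
    (l j : ℕ) (hj : 1 ≤ j) :
    F (j + l) - F j ≤ α * γ * ((1 - α) ^ (-γ - 1) / ((j:ℝ) * γ + 1)
      - (1 - α) ^ (-γ - 1) / (((j:ℝ) + (l:ℝ)) * γ + 1)) := by
  have hjγ : 0 < (j:ℝ) * γ := by
    have : (1:ℝ) ≤ (j:ℝ) := by exact_mod_cast hj
    nlinarith
  have hd := I_diff_le γ α hγ hα hα1 ((j:ℝ) * γ) (((j:ℝ) + (l:ℝ)) * γ) hjγ
    (by nlinarith [Nat.cast_nonneg (α := ℝ) l])
  have hag : 0 < α * γ := by positivity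
  rw [hF (j+l), hF j]
  push_cast
  nlinarith

end

lemma ratio_bound {γ α : ℝ} {F : ℕ → ℝ} (hγ : 0 < γ) (hα : 0 < α) (hα1 : α < 1)
    (hF : ∀ j : ℕ, F j =
      (1 - α) ^ (-γ) - α * γ * ∫ u in Set.Ioo (0 : ℝ) 1, u ^ (j * γ) * (1 - α * u) ^ (-γ - 1))
    (l j : ℕ) (hj : 1 ≤ j) (hB : 0 < 1 - α * (1 + γ) + (j:ℝ) * γ * (1 - α)) :
    |F (j + l) / F j - 1| ≤
      α * γ ^ 2 * l / ((1 + ((j:ℝ) + (l:ℝ)) * γ) * (1 - α * (1 + γ) + (j:ℝ) * γ * (1 - α))) := by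
  have hj1 : (1:ℝ) ≤ (j:ℝ) := by exact_mod_cast hj
  have hl0 : (0:ℝ) ≤ (l:ℝ) := Nat.cast_nonneg l
  have hA : (0:ℝ) < (1 - α) ^ (-γ - 1) := Real.rpow_pos_of_pos (by linarith) _
  set A := (1 - α) ^ (-γ - 1) with hAdef
  set B := 1 - α * (1 + γ) + (j:ℝ) * γ * (1 - α) with hBdef
  have hc1 : (0:ℝ) < (j:ℝ) * γ + 1 := by nlinarith
  have hc2 : (0:ℝ) < ((j:ℝ) + (l:ℝ)) * γ + 1 := by nlinarith
  have hFj : 1 ≤ F j := F_ge_one hγ hα hα1 hF j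
  have hFjpos : 0 < F j := by linarith
  have hnum0 := F_diff_nonneg hγ hα hα1 hF l j hj
  have hnum := F_diff_le hγ hα hα1 hF l j hj
  have hden := F_lower hγ hα hα1 hF j hj
  have hDbpos : 0 < A * B / (1 + (j:ℝ) * γ) := by
    apply div_pos (mul_pos hA hB)
    linarith
  have heq1 : F (j + l) / F j - 1 = (F (j + l) - F j) / F j := by
    field_simp
  rw [heq1, abs_of_nonneg (div_nonneg hnum0 hFjpos.le)]
  have hstep : (F (j + l) - F j) / F j
      ≤ (α * γ * (A / ((j:ℝ) * γ + 1) - A / (((j:ℝ) + (l:ℝ)) * γ + 1)))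
        / (A * B / (1 + (j:ℝ) * γ)) :=
    div_le_div₀ (le_trans hnum0 hnum) hnum hDbpos hden
  refine hstep.trans (le_of_eq ?_)
  rw [div_eq_div_iff (by positivity) (by positivity)]
  field_simp
  ring

set_option maxHeartbeats 1000000 in
lemma ratio_bound_sq {γ α : ℝ} {F : ℕ → ℝ} (hγ : 0 < γ) (hα : 0 < α) (hα1 : α < 1)
    (hF : ∀ j : ℕ, F j =
      (1 - α) ^ (-γ) - α * γ * ∫ u in Set.Ioo (0 : ℝ) 1, u ^ (j * γ) * (1 - α * u) ^ (-γ - 1))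
    (l : ℕ) :
    ∃ C : ℝ, ∀ j : ℕ, 1 ≤ j → |F (j + l) / F j - 1| ≤ C / (j : ℝ) ^ 2 := by
  obtain ⟨j₀, hj₀x⟩ := exists_nat_ge (2 * α * (1 + γ) / (γ * (1 - α)))
  set K : ℝ := (1 - α) ^ (-γ) with hK
  have hKpos : 0 < K := Real.rpow_pos_of_pos (by linarith) _
  refine ⟨2 * α * l / (1 - α) + K * (j₀:ℝ) ^ 2, ?_⟩
  intro j hj
  have hj1 : (1:ℝ) ≤ (j:ℝ) := by exact_mod_cast hj
  have hl0 : (0:ℝ) ≤ (l:ℝ) := Nat.cast_nonneg l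
  have hjsq : (0:ℝ) < (j:ℝ) ^ 2 := by positivity
  have hC1 : (0:ℝ) ≤ 2 * α * l / (1 - α) := by
    apply div_nonneg (by positivity) (by linarith)
  have hC2 : (0:ℝ) ≤ K * (j₀:ℝ) ^ 2 := by positivity
  by_cases hcase : j₀ ≤ j
  · -- large j
    have hxj : 2 * α * (1 + γ) / (γ * (1 - α)) ≤ (j:ℝ) :=
      hj₀x.trans (by exact_mod_cast hcase)
    have hga : (0:ℝ) < γ * (1 - α) := by nlinarith
    have hjga : 2 * α * (1 + γ) ≤ (j:ℝ) * (γ * (1 - α)) := by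
      calc 2 * α * (1 + γ) = 2 * α * (1 + γ) / (γ * (1 - α)) * (γ * (1 - α)) := by
            rw [div_mul_cancel₀ _ hga.ne']
        _ ≤ (j:ℝ) * (γ * (1 - α)) := by
            apply mul_le_mul_of_nonneg_right hxj hga.le
    have hBge : (j:ℝ) * γ * (1 - α) / 2 + 1 ≤ 1 - α * (1 + γ) + (j:ℝ) * γ * (1 - α) := by
      nlinarith
    have hBpos : 0 < 1 - α * (1 + γ) + (j:ℝ) * γ * (1 - α) := by nlinarith
    have h1 := ratio_bound hγ hα hα1 hF l j hj hBpos
    refine h1.trans ?_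
    have hden1 : (j:ℝ) * γ * ((j:ℝ) * γ * (1 - α) / 2)
        ≤ (1 + ((j:ℝ) + (l:ℝ)) * γ) * (1 - α * (1 + γ) + (j:ℝ) * γ * (1 - α)) := by
      have h2 : (j:ℝ) * γ ≤ 1 + ((j:ℝ) + (l:ℝ)) * γ := by nlinarith
      have h3 : (0:ℝ) ≤ (j:ℝ) * γ := by positivity
      have h4 : (0:ℝ) ≤ (j:ℝ) * γ * (1 - α) / 2 := by
        apply div_nonneg (by nlinarith) (by norm_num)
      nlinarith
    calc α * γ ^ 2 * l / ((1 + ((j:ℝ) + (l:ℝ)) * γ) * (1 - α * (1 + γ) + (j:ℝ) * γ * (1 - α)))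
        ≤ α * γ ^ 2 * l / ((j:ℝ) * γ * ((j:ℝ) * γ * (1 - α) / 2)) := by
          have hjgp : (0:ℝ) < (j:ℝ) * γ := by positivity
          have hb : (0:ℝ) < (j:ℝ) * γ * ((j:ℝ) * γ * (1 - α) / 2) := by
            nlinarith [mul_pos (mul_pos hjgp hjgp) (show (0:ℝ) < (1 - α) / 2 by linarith)]
          exact div_le_div_of_nonneg_left (by positivity) hb hden1
      _ = 2 * α * l / (1 - α) / (j:ℝ) ^ 2 := by
          have hjgp : (0:ℝ) < (j:ℝ) * γ := by positivity
          have hb : (0:ℝ) < (j:ℝ) * γ * ((j:ℝ) * γ * (1 - α) / 2) := by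
            nlinarith [mul_pos (mul_pos hjgp hjgp) (show (0:ℝ) < (1 - α) / 2 by linarith)]
          have h1 : (1:ℝ) - α ≠ 0 := by linarith
          have hjj : (j:ℝ) ≠ 0 := by linarith
          have hγ' : γ ≠ 0 := hγ.ne'
          field_simp
      _ ≤ (2 * α * l / (1 - α) + K * (j₀:ℝ) ^ 2) / (j:ℝ) ^ 2 := by
          gcongr
          linarith
  · -- small j
    push_neg at hcase
    have hj0 : (j:ℝ) ≤ (j₀:ℝ) := by exact_mod_cast hcase.le
    have hFj : 1 ≤ F j := F_ge_one hγ hα hα1 hF j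
    have hnum0 := F_diff_nonneg hγ hα hα1 hF l j hj
    have hFle : F (j + l) ≤ K := F_le_K hγ hα hα1 hF (j + l)
    have habs : |F (j + l) / F j - 1| ≤ K := by
      have hFjne : F j ≠ 0 := by linarith
      have heq1 : F (j + l) / F j - 1 = (F (j + l) - F j) / F j := by
        rw [sub_div, div_self hFjne]
      rw [heq1, abs_of_nonneg (div_nonneg hnum0 (by linarith))]
      calc (F (j + l) - F j) / F j ≤ (F (j + l) - F j) / 1 := by
            apply div_le_div_of_nonneg_left hnum0 one_pos hFj
        _ = F (j + l) - F j := by ring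
        _ ≤ K := by linarith
    refine habs.trans ?_
    rw [le_div_iff₀ hjsq]
    have hsq : K * (j:ℝ)^2 ≤ K * (j₀:ℝ)^2 := by
      have := mul_self_le_mul_self (by linarith : (0:ℝ) ≤ (j:ℝ)) hj0
      nlinarith
    nlinarith

theorem F_ratio_bound_and_product_convergence (γ α : ℝ) (hγ : 0 < γ) (hα : 0 < α) (hα1 : α < 1)
    (l : ℕ)
    (F : ℕ → ℝ)
    (hF : ∀ j : ℕ, F j =
      (1 - α) ^ (-γ) - α * γ * ∫ u in Set.Ioo (0 : ℝ) 1, u ^ (j * γ) * (1 - α * u) ^ (-γ - 1)) :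
    (∀ j : ℕ, 1 ≤ j → 0 < 1 - α * (1 + γ) + j * γ * (1 - α) →
        |F (j + l) / F j - 1| ≤
          α * γ ^ 2 * l / ((1 + (j + l) * γ) * (1 - α * (1 + γ) + j * γ * (1 - α)))) ∧
    (∃ C : ℝ, ∀ j : ℕ, 1 ≤ j → |F (j + l) / F j - 1| ≤ C / (j : ℝ) ^ 2) ∧
    (∃ P : ℝ, P ≠ 0 ∧
      Tendsto (fun N : ℕ => ∏ j ∈ Finset.Icc 1 N, F (j + l) / F j) atTop (nhds P)) := by
  refine ⟨?_, ratio_bound_sq hγ hα hα1 hF l, ?_⟩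
  · intro j hj hB
    have := ratio_bound hγ hα hα1 hF l j hj hB
    convert this using 3 <;> push_cast <;> ring
  · -- product convergence
    obtain ⟨C, hC⟩ := ratio_bound_sq hγ hα hα1 hF l
    have hrpos : ∀ j : ℕ, 1 ≤ j → 0 < F (j + l) / F j := by
      intro j hj
      have h1 : 1 ≤ F j := F_ge_one hγ hα hα1 hF j
      have h2 : 1 ≤ F (j + l) := F_ge_one hγ hα hα1 hF (j + l)
      positivity
    have hrone : ∀ j : ℕ, 1 ≤ j → 1 ≤ F (j + l) / F j := by
      intro j hj
      have h1 : 1 ≤ F j := F_ge_one hγ hα hα1 hF j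
      have h2 := F_diff_nonneg hγ hα hα1 hF l j hj
      rw [one_le_div (by linarith)]
      linarith
    set f : ℕ → ℝ := fun n => Real.log (F (n + 1 + l) / F (n + 1)) with hf
    have hf0 : ∀ n, 0 ≤ f n := fun n => Real.log_nonneg (hrone (n + 1) (Nat.le_add_left 1 n))
    have hfle : ∀ n, f n ≤ C / ((n:ℝ) + 1) ^ 2 := by
      intro n
      have h1 := hC (n + 1) (Nat.le_add_left 1 n)
      have h2 : Real.log (F (n + 1 + l) / F (n + 1)) ≤ F (n + 1 + l) / F (n + 1) - 1 :=
        Real.log_le_sub_one_of_pos (hrpos (n + 1) (Nat.le_add_left 1 n))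
      have h3 : F (n + 1 + l) / F (n + 1) - 1 ≤ |F (n + 1 + l) / F (n + 1) - 1| := le_abs_self _
      have h4 : ((n + 1 : ℕ) : ℝ) = (n:ℝ) + 1 := by push_cast; ring
      rw [h4] at h1
      exact le_trans (le_trans h2 h3) h1
    have hgsum : Summable (fun n : ℕ => C / ((n:ℝ) + 1) ^ 2) := by
      have h0 : Summable (fun n : ℕ => 1 / ((n:ℝ)) ^ 2) := by
        exact_mod_cast summable_one_div_nat_pow.mpr one_lt_two
      have h1 : Summable (fun n : ℕ => 1 / ((n:ℝ) + 1) ^ 2) := by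
        have := (summable_nat_add_iff 1).mpr h0
        simpa using this
      simpa [div_eq_mul_inv] using h1.mul_left C
    have hsum : Summable f := Summable.of_nonneg_of_le hf0 hfle hgsum
    refine ⟨Real.exp (∑' n, f n), Real.exp_ne_zero _, ?_⟩
    have hprod : ∀ N : ℕ, ∏ j ∈ Finset.Icc 1 N, F (j + l) / F j
        = Real.exp (∑ i ∈ Finset.range N, f i) := by
      intro N
      induction N with
      | zero => simp
      | succ n ih =>
        rw [Finset.sum_range_succ, Real.exp_add, ← ih,
          Finset.prod_Icc_succ_top (Nat.le_add_left 1 n)]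
        rw [hf]
        rw [Real.exp_log (hrpos (n + 1) (Nat.le_add_left 1 n))]
    have htend := hsum.hasSum.tendsto_sum_nat
    have := (Real.continuous_exp.continuousAt (x := ∑' n, f n)).tendsto.comp htend
    simpa [Function.comp_def, hprod] using this
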